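/- Uniform Gronwall lemma: Let g, h, y be positive locally integrable real functions on [t₀, ∞) with y absolutely continuous, satisfying y'(t) ≤ g(t)y(t) + h(t) for all t ≥ t₀. Suppose there exist positive constants r, a₁, a₂, a₃ such that for all t ≥ t₀, ∫ₜ^{t+r} g ≤ a₁, ∫ₜ^{t+r} h ≤ a₂, and ∫ₜ^{t+r} y ≤ a₃. Then y(t + r) ≤ (a₃/r + a₂) · e^{a₁} for all t ≥ t₀. -/

import Mathlib

open MeasureTheory intervalIntegral Set Filter Topology

lemma prim_slope_lower {a b x c : ℝ} {F' : ℝ → EReal}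
    (hF' : LowerSemicontinuous F')
    (hint : IntegrableOn (fun u => (F' u).toReal) (Icc a b))
    (htop : ∀ᵐ u ∂(volume.restrict (Icc a b)), F' u < ⊤)
    (hbot : ∀ u ∈ Icc a b, F' u ≠ ⊥)
    (hx : x ∈ Ico a b) (hc : (c : EReal) < F' x) :
    ∀ᶠ z in 𝓝[>] x, z ∈ Ioc x b ∧ c * (z - x) ≤ ∫ u in x..z, (F' u).toReal := by
  have B : ∀ᶠ u in 𝓝 x, (c : EReal) < F' u := hF'.lowerSemicontinuousAt _ _ hc
  rcases mem_nhds_iff_exists_Ioo_subset.1 B with ⟨m, M, ⟨hm, hM⟩, H⟩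
  have hIoo : Ioo x (min M b) ∈ 𝓝[>] x := Ioo_mem_nhdsGT (lt_min hM hx.2)
  filter_upwards [hIoo] with z hz
  have hzb : z ∈ Ioc x b := ⟨hz.1, hz.2.le.trans (min_le_right _ _)⟩
  refine ⟨hzb, ?_⟩
  have I : Icc x z ⊆ Icc a b := Icc_subset_Icc hx.1 hzb.2
  calc
    c * (z - x) = ∫ _ in Icc x z, c := by
      simp [Real.volume_Icc, ENNReal.toReal_ofReal, sub_nonneg.2 hz.1.le, mul_comm]
    _ ≤ ∫ u in Icc x z, (F' u).toReal := by
      apply setIntegral_mono_ae_restrict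
      · simp [integrableOn_const, Real.volume_Icc]
      · exact hint.mono_set I
      · have C1 : ∀ᵐ u : ℝ ∂volume.restrict (Icc x z), F' u < ⊤ :=
          ae_mono (Measure.restrict_mono I le_rfl) htop
        have C2 : ∀ᵐ u : ℝ ∂volume.restrict (Icc x z), u ∈ Icc x z :=
          ae_restrict_mem measurableSet_Icc
        filter_upwards [C1, C2] with u hu1 hu2
        have humem : u ∈ Ioo m M :=
          ⟨hm.trans_le hu2.1, (hu2.2.trans_lt hz.2).trans_le (min_le_left _ _)⟩
        have : (c : EReal) ≤ F' u := (H humem).le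
        rw [← EReal.coe_toReal hu1.ne (hbot u (I hu2))] at this
        exact_mod_cast this
    _ = ∫ u in x..z, (F' u).toReal := by
      rw [intervalIntegral.integral_of_le hz.1.le, integral_Icc_eq_integral_Ioc]

/-- Gronwall inequality with integrable coefficients. -/
lemma gronwall_core {a b : ℝ} (hab : a ≤ b) {g h y y' : ℝ → ℝ}
    (hg0 : ∀ x ∈ Icc a b, 0 ≤ g x) (hh0 : ∀ x ∈ Icc a b, 0 ≤ h x)
    (hy0 : ∀ x ∈ Icc a b, 0 ≤ y x)
    (hgi : IntegrableOn g (Icc a b)) (hhi : IntegrableOn h (Icc a b))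
    (hderiv : ∀ x ∈ Icc a b, HasDerivAt y (y' x) x)
    (hbnd : ∀ x ∈ Icc a b, y' x ≤ g x * y x + h x) :
    y b ≤ (y a + ∫ s in a..b, h s) * Real.exp (∫ s in a..b, g s) := by
  have hint_conv : ∀ φ : ℝ → ℝ, (∫ s in a..b, φ s) = ∫ u, φ u ∂(volume.restrict (Icc a b)) := by
    intro φ
    rw [intervalIntegral.integral_of_le hab, ← integral_Icc_eq_integral_Ioc]
  have hInonneg : 0 ≤ ∫ s in a..b, h s :=
    intervalIntegral.integral_nonneg hab fun u hu => hh0 u hu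
  have key : ∀ ε : ℝ, 0 < ε →
      y b ≤ (y a + (∫ s in a..b, h s) + ε) * Real.exp ((∫ s in a..b, g s) + ε) := by
    intro ε εpos
    obtain ⟨G', g_lt_G', G'lsc, G'int, G'top, hG'⟩ :=
      exists_lt_lowerSemicontinuous_integral_lt (μ := volume.restrict (Icc a b)) g hgi εpos
    obtain ⟨H', h_lt_H', H'lsc, H'int, H'top, hH'⟩ :=
      exists_lt_lowerSemicontinuous_integral_lt (μ := volume.restrict (Icc a b)) h hhi εpos
    have G'bot : ∀ u : ℝ, G' u ≠ ⊥ := fun u => ((EReal.bot_lt_coe _).trans (g_lt_G' u)).ne'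
    have H'bot : ∀ u : ℝ, H' u ≠ ⊥ := fun u => ((EReal.bot_lt_coe _).trans (h_lt_H' u)).ne'
    set Gh : ℝ → ℝ := fun u => ∫ v in a..u, (G' v).toReal with hGhdef
    set Hh : ℝ → ℝ := fun u => ∫ v in a..u, (H' v).toReal with hHhdef
    have iiG : ∀ u ∈ Icc a b, IntervalIntegrable (fun v => (G' v).toReal) volume a u :=
      fun u hu => ((show IntegrableOn (fun v => (G' v).toReal) (Icc a b) volume from G'int).mono_set
        (by rw [uIcc_of_le hu.1]; exact Icc_subset_Icc le_rfl hu.2)).intervalIntegrable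
    have iiH : ∀ u ∈ Icc a b, IntervalIntegrable (fun v => (H' v).toReal) volume a u :=
      fun u hu => ((show IntegrableOn (fun v => (H' v).toReal) (Icc a b) volume from H'int).mono_set
        (by rw [uIcc_of_le hu.1]; exact Icc_subset_Icc le_rfl hu.2)).intervalIntegrable
    have Ghnn : ∀ x ∈ Icc a b, 0 ≤ Gh x := by
      intro x hx
      apply intervalIntegral.integral_nonneg_of_ae_restrict hx.1
      have t1 : ∀ᵐ u : ℝ ∂volume.restrict (Icc a x), G' u < ⊤ :=
        ae_mono (Measure.restrict_mono (Icc_subset_Icc le_rfl hx.2) le_rfl) G'top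
      have t2 : ∀ᵐ u : ℝ ∂volume.restrict (Icc a x), u ∈ Icc a x :=
        ae_restrict_mem measurableSet_Icc
      filter_upwards [t1, t2] with u hu1 hu2
      have hgu := g_lt_G' u
      rw [← EReal.coe_toReal hu1.ne (G'bot u)] at hgu
      have hgu' : g u < (G' u).toReal := by exact_mod_cast hgu
      exact ((hg0 u (Icc_subset_Icc le_rfl hx.2 hu2)).trans hgu'.le)
    have GhCont : ContinuousOn Gh (Icc a b) := by
      have := continuousOn_primitive_interval (a := a) (b := b) (μ := volume)
        (f := fun v => (G' v).toReal) (by rw [uIcc_of_le hab]; exact G'int)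
      rwa [uIcc_of_le hab] at this
    have HhCont : ContinuousOn Hh (Icc a b) := by
      have := continuousOn_primitive_interval (a := a) (b := b) (μ := volume)
        (f := fun v => (H' v).toReal) (by rw [uIcc_of_le hab]; exact H'int)
      rwa [uIcc_of_le hab] at this
    set F : ℝ → ℝ := fun u => y u * Real.exp (-Gh u) - Hh u with hFdef
    have yCont : ContinuousOn y (Icc a b) := fun x hx =>
      (hderiv x hx).continuousAt.continuousWithinAt
    have FCont : ContinuousOn F (Icc a b) :=
      (yCont.mul (Real.continuous_exp.comp_continuousOn GhCont.neg)).sub HhCont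
    -- the fencing argument
    have main : ∀ ⦃x⦄, x ∈ Icc a b → F x ≤ y a := by
      apply image_le_of_liminf_slope_right_le_deriv_boundary FCont ?_
        continuousOn_const (fun x _ => hasDerivWithinAt_const x _ (y a))
      · -- bound on liminf of slopes
        intro x hx ρ hρ
        apply Filter.Eventually.frequently
        have hx' : x ∈ Icc a b := Ico_subset_Icc_self hx
        rcases EReal.lt_iff_exists_real_btwn.1 (g_lt_G' x) with ⟨c, hc1, hc2⟩
        rcases EReal.lt_iff_exists_real_btwn.1 (h_lt_H' x) with ⟨d, hd1, hd2⟩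
        have hc1' : g x < c := by exact_mod_cast hc1
        have hd1' : h x < d := by exact_mod_cast hd1
        have evG := prim_slope_lower G'lsc G'int G'top (fun u _ => G'bot u) hx hc2
        have evH := prim_slope_lower H'lsc H'int H'top (fun u _ => H'bot u) hx hd2
        set ψ : ℝ → ℝ := fun z => Real.exp (-Gh x) * (y z * Real.exp (-(c * (z - x)))) with hψdef
        set L : ℝ → ℝ := fun _ => 0 with hL0  -- dummy
        have hinner : HasDerivAt (fun z : ℝ => Real.exp (-(c * (z - x)))) (-c) x := by
          have h1 : HasDerivAt (fun z : ℝ => -(c * (z - x))) (-c) x := by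
            simpa using (((hasDerivAt_id x).sub_const x).const_mul c).fun_neg
          simpa using h1.exp
        have hψ : HasDerivAt ψ (Real.exp (-Gh x) * (y' x - c * y x)) x := by
          have := ((hderiv x hx').mul hinner).const_mul (Real.exp (-Gh x))
          convert (show HasDerivAt ψ _ x from this) using 1
          simp
          ring
        have hE1 : Real.exp (-Gh x) ≤ 1 := by
          rw [Real.exp_le_one_iff]
          linarith [Ghnn x hx']
        have hL1 : y' x - c * y x ≤ h x := by
          nlinarith [hbnd x hx', hy0 x hx']
        have hLd : Real.exp (-Gh x) * (y' x - c * y x) < d := by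
          rcases le_or_gt 0 (y' x - c * y x) with hcase | hcase
          · have := mul_le_mul_of_nonneg_right hE1 hcase
            rw [one_mul] at this
            linarith
          · have : Real.exp (-Gh x) * (y' x - c * y x) ≤ 0 :=
              mul_nonpos_of_nonneg_of_nonpos (Real.exp_pos _).le hcase.le
            linarith [hh0 x hx']
        have hslope : Tendsto (slope ψ x) (𝓝[>] x) (𝓝 (Real.exp (-Gh x) * (y' x - c * y x))) :=
          (hasDerivAt_iff_tendsto_slope.1 hψ).mono_left
            (nhdsWithin_mono _ fun z hz => Set.mem_compl_singleton_iff.mpr (ne_of_gt hz))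
        have evψ : ∀ᶠ z in 𝓝[>] x, slope ψ x z < d := hslope.eventually_lt_const hLd
        filter_upwards [evG, evH, evψ, self_mem_nhdsWithin] with z hzG hzH hzψ hzx
        have hδ : 0 < z - x := sub_pos.2 hzx
        have hz_in : z ∈ Icc a b := ⟨hx.1.trans hzG.1.1.le, hzG.1.2⟩
        have hGhsub : Gh z - Gh x = ∫ u in x..z, (G' u).toReal :=
          integral_interval_sub_left (iiG z hz_in) (iiG x hx')
        have hHhsub : Hh z - Hh x = ∫ u in x..z, (H' u).toReal :=
          integral_interval_sub_left (iiH z hz_in) (iiH x hx')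
        have hG2 : c * (z - x) ≤ Gh z - Gh x := hGhsub ▸ hzG.2
        have hH2 : d * (z - x) ≤ Hh z - Hh x := hHhsub ▸ hzH.2
        have step1 : y z * Real.exp (-Gh z) ≤ ψ z := by
          have hyz : 0 ≤ y z := hy0 z hz_in
          have hexp : Real.exp (-Gh z) ≤ Real.exp (-Gh x) * Real.exp (-(c * (z - x))) := by
            rw [← Real.exp_add]
            exact Real.exp_le_exp.2 (by linarith)
          calc y z * Real.exp (-Gh z) ≤ y z * (Real.exp (-Gh x) * Real.exp (-(c * (z - x)))) :=
                mul_le_mul_of_nonneg_left hexp hyz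
            _ = ψ z := by rw [hψdef]; ring
        have hψx : ψ x = y x * Real.exp (-Gh x) := by simp [hψdef, mul_comm]
        have hfz : F z - F x ≤ (ψ z - ψ x) - d * (z - x) := by
          have hFexp : F z - F x =
              y z * Real.exp (-Gh z) - y x * Real.exp (-Gh x) - (Hh z - Hh x) := by
            simp [hFdef]; ring
          rw [hFexp, hψx]
          linarith
        have hs1 : slope F x z ≤ slope ψ x z - d := by
          rw [slope_def_field, slope_def_field, div_le_iff₀ hδ, sub_mul,
            div_mul_cancel₀ _ hδ.ne']
          linarith
        calc slope F x z ≤ slope ψ x z - d := hs1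
          _ < d - d := by linarith
          _ = 0 := by ring
          _ < ρ := hρ
      · -- F a ≤ y a
        simp [hFdef, hGhdef, hHhdef]
    -- conclude
    have hfb := main (right_mem_Icc.2 hab)
    have hFb : y b * Real.exp (-Gh b) - Hh b ≤ y a := hfb
    have hyb : y b ≤ (y a + Hh b) * Real.exp (Gh b) := by
      have h1 : y b = (y b * Real.exp (-Gh b)) * Real.exp (Gh b) := by
        rw [mul_assoc, ← Real.exp_add]
        simp
      rw [h1]
      exact mul_le_mul_of_nonneg_right (by linarith) (Real.exp_pos _).le
    have hGb : Gh b ≤ (∫ s in a..b, g s) + ε := by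
      have := hG'
      rw [hint_conv g]
      calc Gh b = ∫ u, (G' u).toReal ∂(volume.restrict (Icc a b)) := hint_conv _
        _ ≤ (∫ u, g u ∂(volume.restrict (Icc a b))) + ε := hG'.le
    have hHb : Hh b ≤ (∫ s in a..b, h s) + ε := by
      rw [hint_conv h]
      calc Hh b = ∫ u, (H' u).toReal ∂(volume.restrict (Icc a b)) := hint_conv _
        _ ≤ (∫ u, h u ∂(volume.restrict (Icc a b))) + ε := hH'.le
    calc y b ≤ (y a + Hh b) * Real.exp (Gh b) := hyb
      _ ≤ (y a + (∫ s in a..b, h s) + ε) * Real.exp ((∫ s in a..b, g s) + ε) := by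
        apply mul_le_mul (by linarith) (Real.exp_le_exp.2 hGb) (Real.exp_pos _).le
        linarith [hy0 a (left_mem_Icc.2 hab)]
  have T : Tendsto (fun ε : ℝ => (y a + (∫ s in a..b, h s) + ε) *
      Real.exp ((∫ s in a..b, g s) + ε)) (𝓝[>] 0)
      (𝓝 ((y a + ∫ s in a..b, h s) * Real.exp (∫ s in a..b, g s))) := by
    have hcont : Continuous fun ε : ℝ => (y a + (∫ s in a..b, h s) + ε) *
        Real.exp ((∫ s in a..b, g s) + ε) := by fun_prop
    have h0 : Tendsto (fun ε : ℝ => (y a + (∫ s in a..b, h s) + ε) *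
        Real.exp ((∫ s in a..b, g s) + ε)) (𝓝 0)
        (𝓝 ((y a + ∫ s in a..b, h s) * Real.exp (∫ s in a..b, g s))) := by
      simpa using hcont.tendsto 0
    exact h0.mono_left nhdsWithin_le_nhds
  exact ge_of_tendsto T (by filter_upwards [self_mem_nhdsWithin] with ε hε using key ε hε)

/-- Uniform Gronwall lemma. -/
theorem uniform_gronwall (t₀ r a₁ a₂ a₃ : ℝ) (g h y y' : ℝ → ℝ)
    (hr : 0 < r) (ha₁ : 0 < a₁) (ha₂ : 0 < a₂) (ha₃ : 0 < a₃)
    (hg : ∀ t, t₀ ≤ t → 0 < g t) (hh : ∀ t, t₀ ≤ t → 0 < h t) (hy : ∀ t, t₀ ≤ t → 0 < y t)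
    (hgint : ∀ t, t₀ ≤ t → IntervalIntegrable g MeasureTheory.volume t (t + r))
    (hhint : ∀ t, t₀ ≤ t → IntervalIntegrable h MeasureTheory.volume t (t + r))
    (hyint : ∀ t, t₀ ≤ t → IntervalIntegrable y MeasureTheory.volume t (t + r))
    (hderiv : ∀ t, t₀ ≤ t → HasDerivAt y (y' t) t)
    (hdiff : ∀ t, t₀ ≤ t → y' t ≤ g t * y t + h t)
    (hIg : ∀ t, t₀ ≤ t → (∫ s in t..t + r, g s) ≤ a₁)
    (hIh : ∀ t, t₀ ≤ t → (∫ s in t..t + r, h s) ≤ a₂)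
    (hIy : ∀ t, t₀ ≤ t → (∫ s in t..t + r, y s) ≤ a₃) :
    ∀ t, t₀ ≤ t → y (t + r) ≤ (a₃ / r + a₂) * Real.exp a₁ := by
  intro t ht
  have htr : t ≤ t + r := by linarith
  have hmem : ∀ u ∈ Icc t (t + r), t₀ ≤ u := fun u hu => ht.trans hu.1
  have yCont : ContinuousOn y (Icc t (t + r)) := fun u hu =>
    (hderiv u (hmem u hu)).continuousAt.continuousWithinAt
  obtain ⟨s, hst, hsmin⟩ := isCompact_Icc.exists_isMinOn (nonempty_Icc.2 htr) yCont
  have hs0 : t₀ ≤ s := ht.trans hst.1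
  -- y s ≤ a₃ / r
  have hys : y s ≤ a₃ / r := by
    have h1 : (∫ u in t..t + r, (fun _ => y s) u) ≤ ∫ u in t..t + r, y u :=
      intervalIntegral.integral_mono_on htr intervalIntegrable_const (hyint t ht)
        fun u hu => hsmin hu
    simp only [intervalIntegral.integral_const, smul_eq_mul, add_sub_cancel_left] at h1
    rw [le_div_iff₀ hr]
    nlinarith [hIy t ht]
  have hsub : Icc s (t + r) ⊆ Icc t (t + r) := Icc_subset_Icc hst.1 le_rfl
  -- integrability on Icc s (t + r)
  have hgiOn : MeasureTheory.IntegrableOn g (Icc s (t + r)) := by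
    rw [integrableOn_Icc_iff_integrableOn_Ioc]
    exact ((intervalIntegrable_iff_integrableOn_Ioc_of_le htr).1 (hgint t ht)).mono_set
      (Ioc_subset_Ioc hst.1 le_rfl)
  have hhiOn : MeasureTheory.IntegrableOn h (Icc s (t + r)) := by
    rw [integrableOn_Icc_iff_integrableOn_Ioc]
    exact ((intervalIntegrable_iff_integrableOn_Ioc_of_le htr).1 (hhint t ht)).mono_set
      (Ioc_subset_Ioc hst.1 le_rfl)
  have hcore := gronwall_core hst.2 (g := g) (h := h) (y := y) (y' := y')
    (fun x hx => (hg x (hmem x (hsub hx))).le) (fun x hx => (hh x (hmem x (hsub hx))).le)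
    (fun x hx => (hy x (hmem x (hsub hx))).le) hgiOn hhiOn
    (fun x hx => hderiv x (hmem x (hsub hx))) (fun x hx => hdiff x (hmem x (hsub hx)))
  -- bound the integrals from s
  have hii : ∀ φ : ℝ → ℝ, IntervalIntegrable φ MeasureTheory.volume t (t + r) →
      IntervalIntegrable φ MeasureTheory.volume t s ∧
      IntervalIntegrable φ MeasureTheory.volume s (t + r) := by
    intro φ hφ
    constructor
    · exact hφ.mono_set (by rw [uIcc_of_le hst.1, uIcc_of_le htr]; exact Icc_subset_Icc le_rfl hst.2)
    · exact hφ.mono_set (by rw [uIcc_of_le hst.2, uIcc_of_le htr]; exact Icc_subset_Icc hst.1 le_rfl)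
  have hgs : (∫ u in s..t + r, g u) ≤ a₁ := by
    obtain ⟨I1, I2⟩ := hii g (hgint t ht)
    have hsplit := intervalIntegral.integral_add_adjacent_intervals I1 I2
    have hpos : 0 ≤ ∫ u in t..s, g u :=
      intervalIntegral.integral_nonneg hst.1 fun u hu =>
        (hg u (hmem u ⟨hu.1, hu.2.trans hst.2⟩)).le
    have := hIg t ht
    linarith
  have hhs : (∫ u in s..t + r, h u) ≤ a₂ := by
    obtain ⟨I1, I2⟩ := hii h (hhint t ht)
    have hsplit := intervalIntegral.integral_add_adjacent_intervals I1 I2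
    have hpos : 0 ≤ ∫ u in t..s, h u :=
      intervalIntegral.integral_nonneg hst.1 fun u hu =>
        (hh u (hmem u ⟨hu.1, hu.2.trans hst.2⟩)).le
    have := hIh t ht
    linarith
  have hInn : 0 ≤ ∫ u in s..t + r, h u :=
    intervalIntegral.integral_nonneg hst.2 fun u hu => (hh u (hmem u (hsub hu))).le
  refine hcore.trans ?_
  have hr' : 0 < a₃ / r + a₂ := by positivity
  apply mul_le_mul _ (Real.exp_le_exp.2 hgs) (Real.exp_pos _).le hr'.le
  linarith
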